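/- arXiv:2103.11275 — 6 statements merged into one kernel-verified Lean document; each statement's English description precedes it below -/
import Mathlib

section
/- Let P and Q be probability measures on a measurable space 𝒳 with P absolutely continuous with respect to Q, let r = dP/dQ be the Radon–Nikodym derivative, and fix α, β, γ > 0. Define f*(x) = (r(x) − α)/(β r(x) + γ). Then for every measurable f : 𝒳 → ℝ with f ∈ L²(P) ∩ L²(Q), one has J(f) ≤ J(f*), where J(g) = E_P[g] − α E_Q[g] − (β/2) E_P[g²] − (γ/2) E_Q[g²]. In particular f* attains the supremum of J over all such functions f. -/
open MeasureTheory

/-- The RPC functional `J(g) = E_P[g] - α E_Q[g] - (β/2) E_P[g²] - (γ/2) E_Q[g²]`. -/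
noncomputable def rpcJ {X : Type*} [MeasurableSpace X] (P Q : Measure X) (α β γ : ℝ)
    (g : X → ℝ) : ℝ :=
  (∫ x, g x ∂P) - α * (∫ x, g x ∂Q) - β / 2 * (∫ x, (g x) ^ 2 ∂P)
    - γ / 2 * (∫ x, (g x) ^ 2 ∂Q)

/-- The relative density ratio `f*(x) = (r(x) - α)/(β r(x) + γ)` with `r = dP/dQ`. -/
noncomputable def relRatio {X : Type*} [MeasurableSpace X] (P Q : Measure X) (α β γ : ℝ)
    (x : X) : ℝ :=
  ((P.rnDeriv Q x).toReal - α) / (β * (P.rnDeriv Q x).toReal + γ)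

/-- `J` rewritten as a single integral against `Q`. -/
lemma rpcJ_eq_integral {X : Type*} [MeasurableSpace X] {P Q : Measure X}
    [IsProbabilityMeasure P] [IsProbabilityMeasure Q] (hPQ : P ≪ Q)
    (α β γ : ℝ) (f : X → ℝ) (hfP : MemLp f 2 P) (hfQ : MemLp f 2 Q) :
    rpcJ P Q α β γ f
    = ∫ x, (((P.rnDeriv Q x).toReal - α) * f x
        - (β * (P.rnDeriv Q x).toReal + γ) / 2 * (f x) ^ 2) ∂Q := by
  have h1P : Integrable f P := hfP.integrable one_le_two
  have h1Q : Integrable f Q := hfQ.integrable one_le_two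
  have h2P : Integrable (fun x => (f x) ^ 2) P := hfP.integrable_sq
  have h2Q : Integrable (fun x => (f x) ^ 2) Q := hfQ.integrable_sq
  have hr1 : Integrable (fun x => (P.rnDeriv Q x).toReal • f x) Q :=
    (integrable_rnDeriv_smul_iff hPQ).mpr h1P
  have hr2 : Integrable (fun x => (P.rnDeriv Q x).toReal • (f x) ^ 2) Q :=
    (integrable_rnDeriv_smul_iff hPQ).mpr h2P
  have e1 : ∫ x, f x ∂P = ∫ x, (P.rnDeriv Q x).toReal • f x ∂Q :=
    (integral_rnDeriv_smul hPQ).symm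
  have e2 : ∫ x, (f x) ^ 2 ∂P = ∫ x, (P.rnDeriv Q x).toReal • (f x) ^ 2 ∂Q :=
    (integral_rnDeriv_smul hPQ).symm
  rw [rpcJ, e1, e2]
  have : ∀ x, ((P.rnDeriv Q x).toReal - α) * f x
        - (β * (P.rnDeriv Q x).toReal + γ) / 2 * (f x) ^ 2
      = ((P.rnDeriv Q x).toReal • f x - α * f x)
        - (β / 2 * ((P.rnDeriv Q x).toReal • (f x) ^ 2) + γ / 2 * (f x) ^ 2) := by
    intro x; simp [smul_eq_mul]; ring
  simp_rw [this]
  have ha : Integrable (fun x => (P.rnDeriv Q x).toReal • f x - α * f x) Q :=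
    hr1.sub (h1Q.const_mul α)
  have hb : Integrable (fun x => β / 2 * ((P.rnDeriv Q x).toReal • (f x) ^ 2)
      + γ / 2 * (f x) ^ 2) Q := (hr2.const_mul _).add (h2Q.const_mul _)
  rw [integral_sub ha hb, integral_sub hr1 (h1Q.const_mul α),
      integral_add (hr2.const_mul _) (h2Q.const_mul _),
      integral_const_mul, integral_const_mul, integral_const_mul]
  ring

/-- Pointwise optimality of `a/b` for the quadratic `a*g - b/2*g²`. -/
lemma quad_le {a b g : ℝ} (hb : 0 < b) :
    a * g - b / 2 * g ^ 2 ≤ a * (a / b) - b / 2 * (a / b) ^ 2 := by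
  have hb' : b ≠ 0 := hb.ne'
  have key : a * (a / b) - b / 2 * (a / b) ^ 2 - (a * g - b / 2 * g ^ 2)
      = b / 2 * (g - a / b) ^ 2 := by field_simp; ring
  nlinarith [mul_nonneg (by linarith : (0:ℝ) ≤ b / 2) (sq_nonneg (g - a / b))]

/-- Lemma 1 (Optimal Solution for J_RPC): for probability measures `P ≪ Q` and
relative parameters `α, β, γ > 0`, every measurable `f ∈ L²(P) ∩ L²(Q)` satisfies
`J(f) ≤ J(f*)` where `f* = (dP/dQ - α)/(β dP/dQ + γ)`; in particular `f*` attains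
the supremum of `J` over all such functions. -/
theorem rpc_optimal_solution {X : Type*} [MeasurableSpace X] (P Q : Measure X)
    [IsProbabilityMeasure P] [IsProbabilityMeasure Q] (hPQ : P ≪ Q)
    (α β γ : ℝ) (hα : 0 < α) (hβ : 0 < β) (hγ : 0 < γ) :
    (∀ f : X → ℝ, Measurable f → MemLp f 2 P → MemLp f 2 Q →
      rpcJ P Q α β γ f ≤ rpcJ P Q α β γ (relRatio P Q α β γ)) ∧
    IsGreatest {z : ℝ | ∃ f : X → ℝ, Measurable f ∧ MemLp f 2 P ∧ MemLp f 2 Q ∧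
        z = rpcJ P Q α β γ f}
      (rpcJ P Q α β γ (relRatio P Q α β γ)) := by
  set r : X → ℝ := fun x => (P.rnDeriv Q x).toReal with hr_def
  have hr_meas : Measurable r := (Measure.measurable_rnDeriv P Q).ennreal_toReal
  have hr_nonneg : ∀ x, 0 ≤ r x := fun x => ENNReal.toReal_nonneg
  have hden : ∀ x, 0 < β * r x + γ := fun x => by nlinarith [hr_nonneg x]
  -- f* is measurable
  have hstar_meas : Measurable (relRatio P Q α β γ) := by
    unfold relRatio
    exact (hr_meas.sub measurable_const).div
      ((hr_meas.const_mul β).add measurable_const)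
  -- f* is bounded
  set M : ℝ := max (1 / β) (α / γ) with hM_def
  have hstar_bdd : ∀ x, |relRatio P Q α β γ x| ≤ M := by
    intro x
    have hd := hden x
    have h1 : (1 : ℝ) / β ≤ M := le_max_left _ _
    have h2 : α / γ ≤ M := le_max_right _ _
    have hM1 : 1 ≤ M * β := by
      rw [div_le_iff₀ hβ] at h1; linarith
    have hM2 : α ≤ M * γ := by
      rw [div_le_iff₀ hγ] at h2; linarith
    rw [relRatio, abs_div, abs_of_pos hd, div_le_iff₀ hd, abs_le]
    constructor <;> nlinarith [hr_nonneg x, abs_nonneg (r x - α), le_abs_self (r x - α),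
      neg_abs_le (r x - α)]
  -- hence f* ∈ L²
  have hstarP : MemLp (relRatio P Q α β γ) 2 P :=
    MemLp.of_bound hstar_meas.aestronglyMeasurable M
      (Filter.Eventually.of_forall (by simpa using hstar_bdd))
  have hstarQ : MemLp (relRatio P Q α β γ) 2 Q :=
    MemLp.of_bound hstar_meas.aestronglyMeasurable M
      (Filter.Eventually.of_forall (by simpa using hstar_bdd))
  -- the main inequality
  have key : ∀ f : X → ℝ, Measurable f → MemLp f 2 P → MemLp f 2 Q →
      rpcJ P Q α β γ f ≤ rpcJ P Q α β γ (relRatio P Q α β γ) := by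
    intro f hf hfP hfQ
    rw [rpcJ_eq_integral hPQ α β γ f hfP hfQ,
        rpcJ_eq_integral hPQ α β γ _ hstarP hstarQ]
    -- integrability of both integrands
    have hint : ∀ (g : X → ℝ), MemLp g 2 P → MemLp g 2 Q →
        Integrable (fun x => (r x - α) * g x - (β * r x + γ) / 2 * (g x) ^ 2) Q := by
      intro g hgP hgQ
      have h1P : Integrable g P := hgP.integrable one_le_two
      have h1Q : Integrable g Q := hgQ.integrable one_le_two
      have h2P : Integrable (fun x => (g x) ^ 2) P := hgP.integrable_sq
      have h2Q : Integrable (fun x => (g x) ^ 2) Q := hgQ.integrable_sq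
      have hr1 : Integrable (fun x => r x • g x) Q :=
        (integrable_rnDeriv_smul_iff hPQ).mpr h1P
      have hr2 : Integrable (fun x => r x • (g x) ^ 2) Q :=
        (integrable_rnDeriv_smul_iff hPQ).mpr h2P
      have : (fun x => (r x - α) * g x - (β * r x + γ) / 2 * (g x) ^ 2)
          = fun x => (r x • g x - α * g x)
            - (β / 2 * (r x • (g x) ^ 2) + γ / 2 * (g x) ^ 2) := by
        funext x; simp [smul_eq_mul]; ring
      rw [this]
      exact (hr1.sub (h1Q.const_mul α)).sub ((hr2.const_mul _).add (h2Q.const_mul _))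
    refine integral_mono (hint f hfP hfQ) (hint _ hstarP hstarQ) ?_
    intro x
    dsimp only
    have hd := hden x
    have : relRatio P Q α β γ x = (r x - α) / (β * r x + γ) := rfl
    rw [this]
    exact quad_le hd
  refine ⟨key, ?_, ?_⟩
  · exact ⟨relRatio P Q α β γ, hstar_meas, hstarP, hstarQ, rfl⟩
  · rintro z ⟨f, hf, hfP, hfQ, rfl⟩
    exact key f hf hfP hfQ
end

section
/- Let P and Q be probability measures on a measurable space 𝒳 with P absolutely continuous with respect to Q, let r = dP/dQ, fix α, β, γ > 0, and set f*(x) = (r(x) − α)/(β r(x) + γ). Then for every measurable f : 𝒳 → ℝ with f ∈ L²(P) ∩ L²(Q), the exact quadratic expansion J(f*) − J(f) = (β/2) E_P[(f − f*)²] + (γ/2) E_Q[(f − f*)²] holds, where J(g) = E_P[g] − α E_Q[g] − (β/2) E_P[g²] − (γ/2) E_Q[g²]. Consequently the maximizer of J is unique up to (P + Q)-almost-everywhere equality. -/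
open MeasureTheory

/-- Quadratic-expansion form of Lemma 1: for probability measures `P ≪ Q`,
relative parameters `α, β, γ > 0`, and any measurable `f ∈ L²(P) ∩ L²(Q)`,
`J(f*) - J(f) = (β/2) E_P[(f - f*)²] + (γ/2) E_Q[(f - f*)²]`; consequently the
maximizer of `J` is unique up to `(P + Q)`-a.e. equality. -/
theorem rpc_quadratic_expansion {X : Type*} [MeasurableSpace X] (P Q : Measure X)
    [IsProbabilityMeasure P] [IsProbabilityMeasure Q] (hPQ : P ≪ Q)
    (α β γ : ℝ) (hα : 0 < α) (hβ : 0 < β) (hγ : 0 < γ)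
    (f : X → ℝ) (hf : Measurable f) (hf2P : MemLp f 2 P) (hf2Q : MemLp f 2 Q) :
    rpcJ P Q α β γ (relRatio P Q α β γ) - rpcJ P Q α β γ f
      = β / 2 * (∫ x, (f x - relRatio P Q α β γ x) ^ 2 ∂P)
        + γ / 2 * (∫ x, (f x - relRatio P Q α β γ x) ^ 2 ∂Q) ∧
    (rpcJ P Q α β γ f = rpcJ P Q α β γ (relRatio P Q α β γ) →
      f =ᵐ[P + Q] relRatio P Q α β γ) := by
  set r : X → ℝ := fun x => (P.rnDeriv Q x).toReal with hrdef
  have hrmeas : Measurable r := (Measure.measurable_rnDeriv P Q).ennreal_toReal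
  have hr0 : ∀ x, 0 ≤ r x := fun x => ENNReal.toReal_nonneg
  have hden : ∀ x, 0 < β * r x + γ := fun x => by nlinarith [hr0 x]
  set g : X → ℝ := relRatio P Q α β γ with hgdef
  have hgx : ∀ x, g x = (r x - α) / (β * r x + γ) := fun x => rfl
  have hgmeas : Measurable g :=
    (hrmeas.sub measurable_const).div ((measurable_const.mul hrmeas).add measurable_const)
  set M : ℝ := max (1 / β) (α / γ) with hMdef
  have hMβ : 1 ≤ M * β := by
    have h1 : 1 / β ≤ M := le_max_left _ _
    rw [div_le_iff₀ hβ] at h1; linarith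
  have hMγ : α ≤ M * γ := by
    have h1 : α / γ ≤ M := le_max_right _ _
    rw [div_le_iff₀ hγ] at h1; linarith
  have hgbd : ∀ x, ‖g x‖ ≤ M := by
    intro x
    rw [hgx, Real.norm_eq_abs, abs_div, abs_of_pos (hden x), div_le_iff₀ (hden x)]
    rcases abs_cases (r x - α) with ⟨h, _⟩ | ⟨h, _⟩ <;> rw [h] <;> nlinarith [hr0 x]
  have hg2P : MemLp g 2 P :=
    MemLp.of_bound hgmeas.aestronglyMeasurable M (Filter.Eventually.of_forall hgbd)
  have hg2Q : MemLp g 2 Q :=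
    MemLp.of_bound hgmeas.aestronglyMeasurable M (Filter.Eventually.of_forall hgbd)
  -- basic integrability facts
  have hfiP : Integrable f P := hf2P.integrable one_le_two
  have hfiQ : Integrable f Q := hf2Q.integrable one_le_two
  have hgiP : Integrable g P := hg2P.integrable one_le_two
  have hgiQ : Integrable g Q := hg2Q.integrable one_le_two
  have hfsqP : Integrable (fun x => f x ^ 2) P := hf2P.integrable_sq
  have hfsqQ : Integrable (fun x => f x ^ 2) Q := hf2Q.integrable_sq
  have hgsqP : Integrable (fun x => g x ^ 2) P := hg2P.integrable_sq
  have hgsqQ : Integrable (fun x => g x ^ 2) Q := hg2Q.integrable_sq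
  have hdsqP : Integrable (fun x => (f x - g x) ^ 2) P := (hf2P.sub hg2P).integrable_sq
  have hdsqQ : Integrable (fun x => (f x - g x) ^ 2) Q := (hf2Q.sub hg2Q).integrable_sq
  -- transfer to Q via the Radon–Nikodym derivative
  have hmul : ∀ (h : X → ℝ), Integrable h P → Integrable (fun x => r x * h x) Q := by
    intro h hh
    simpa [smul_eq_mul] using (integrable_rnDeriv_smul_iff hPQ).mpr hh
  have hint : ∀ (h : X → ℝ), ∫ x, h x ∂P = ∫ x, r x * h x ∂Q := by
    intro h
    simpa [smul_eq_mul] using (integral_rnDeriv_smul hPQ (f := h)).symm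
  -- rpcJ as a single integral over Q
  have hJ : ∀ (h : X → ℝ), Integrable h P → Integrable h Q →
      Integrable (fun x => h x ^ 2) P → Integrable (fun x => h x ^ 2) Q →
      rpcJ P Q α β γ h
        = ∫ x, ((r x - α) * h x - (β * r x + γ) / 2 * h x ^ 2) ∂Q := by
    intro h hiP hiQ hsP hsQ
    have e1 : Integrable (fun x => r x * h x) Q := hmul _ hiP
    have e2 : Integrable (fun x => r x * h x ^ 2) Q := hmul _ hsP
    rw [show (fun x => (r x - α) * h x - (β * r x + γ) / 2 * h x ^ 2)
        = fun x => r x * h x - α * h x - (β / 2 * (r x * h x ^ 2) + γ / 2 * h x ^ 2)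
      from funext fun x => by ring]
    have eA : Integrable (fun x => r x * h x - α * h x) Q := e1.sub (hiQ.const_mul α)
    have eB : Integrable (fun x => β / 2 * (r x * h x ^ 2) + γ / 2 * h x ^ 2) Q :=
      (e2.const_mul (β / 2)).add (hsQ.const_mul (γ / 2))
    have eC : Integrable (fun x => α * h x) Q := hiQ.const_mul α
    have eD : Integrable (fun x => β / 2 * (r x * h x ^ 2)) Q := e2.const_mul (β / 2)
    have eE : Integrable (fun x => γ / 2 * h x ^ 2) Q := hsQ.const_mul (γ / 2)
    rw [integral_sub eA eB, integral_sub e1 eC, integral_add eD eE,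
      integral_const_mul, integral_const_mul, integral_const_mul]
    rw [rpcJ, hint h, hint (fun x => h x ^ 2)]
    ring
  -- integrability of the combined integrand
  have hFint : ∀ (h : X → ℝ), Integrable h P → Integrable h Q →
      Integrable (fun x => h x ^ 2) P → Integrable (fun x => h x ^ 2) Q →
      Integrable (fun x => (r x - α) * h x - (β * r x + γ) / 2 * h x ^ 2) Q := by
    intro h hiP hiQ hsP hsQ
    have hI : Integrable
        (fun x => r x * h x - α * h x - (β / 2 * (r x * h x ^ 2) + γ / 2 * h x ^ 2)) Q :=
      ((hmul _ hiP).sub (hiQ.const_mul α)).sub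
        (((hmul _ hsP).const_mul (β / 2)).add (hsQ.const_mul (γ / 2)))
    exact hI.congr (Filter.Eventually.of_forall fun x => by ring)
  -- the quadratic expansion
  have hdiff : rpcJ P Q α β γ g - rpcJ P Q α β γ f
      = β / 2 * (∫ x, (f x - g x) ^ 2 ∂P) + γ / 2 * (∫ x, (f x - g x) ^ 2 ∂Q) := by
    have e2 : Integrable (fun x => r x * (f x - g x) ^ 2) Q := hmul _ hdsqP
    rw [hJ g hgiP hgiQ hgsqP hgsqQ, hJ f hfiP hfiQ hfsqP hfsqQ,
      ← integral_sub (hFint g hgiP hgiQ hgsqP hgsqQ) (hFint f hfiP hfiQ hfsqP hfsqQ)]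
    have hpt : ∀ x, ((r x - α) * g x - (β * r x + γ) / 2 * g x ^ 2)
          - ((r x - α) * f x - (β * r x + γ) / 2 * f x ^ 2)
        = β / 2 * (r x * (f x - g x) ^ 2) + γ / 2 * (f x - g x) ^ 2 := by
      intro x
      have ha := (hden x).ne'
      have hk : g x * (β * r x + γ) = r x - α := by rw [hgx, div_mul_cancel₀ _ ha]
      linear_combination (f x - g x) * hk
    have eD : Integrable (fun x => β / 2 * (r x * (f x - g x) ^ 2)) Q := e2.const_mul (β / 2)
    have eE : Integrable (fun x => γ / 2 * (f x - g x) ^ 2) Q := hdsqQ.const_mul (γ / 2)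
    rw [integral_congr_ae (Filter.Eventually.of_forall hpt), integral_add eD eE,
      integral_const_mul, integral_const_mul, ← hint (fun x => (f x - g x) ^ 2)]
  refine ⟨hdiff, fun heq => ?_⟩
  have h0 : β / 2 * (∫ x, (f x - g x) ^ 2 ∂P) + γ / 2 * (∫ x, (f x - g x) ^ 2 ∂Q) = 0 := by
    rw [← hdiff, heq]; ring
  have hIP : 0 ≤ ∫ x, (f x - g x) ^ 2 ∂P := integral_nonneg fun x => sq_nonneg _
  have hIQ : 0 ≤ ∫ x, (f x - g x) ^ 2 ∂Q := integral_nonneg fun x => sq_nonneg _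
  have hIQ0 : ∫ x, (f x - g x) ^ 2 ∂Q = 0 := by nlinarith
  have haeQ : (fun x => (f x - g x) ^ 2) =ᵐ[Q] 0 :=
    (integral_eq_zero_iff_of_nonneg (fun x => sq_nonneg _) hdsqQ).mp hIQ0
  have hQ' : f =ᵐ[Q] g := by
    filter_upwards [haeQ] with x hx
    have hx' : (f x - g x) ^ 2 = 0 := hx
    nlinarith [sq_nonneg (f x - g x)]
  have hP' : f =ᵐ[P] g := hQ'.filter_mono hPQ.ae_le
  rw [Filter.EventuallyEq, ae_add_measure_iff]
  exact ⟨hP', hQ'⟩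
end

section
/- Let P and Q be probability measures on a measurable space 𝒳 and fix α, β, γ > 0. Then for every measurable f : 𝒳 → ℝ with f ∈ L²(P) ∩ L²(Q), J(f) ≤ 1/(2β) + α²/(2γ), where J(f) = E_P[f] − α E_Q[f] − (β/2) E_P[f²] − (γ/2) E_Q[f²]; moreover J(0) = 0, so the supremum of J over all such f satisfies 0 ≤ sup_f J(f) ≤ 1/(2β) + α²/(2γ). -/
open MeasureTheory

/-- Boundedness part of Proposition 1: for probability measures `P`, `Q` and
relative parameters `α, β, γ > 0`, every measurable `f ∈ L²(P) ∩ L²(Q)` satisfies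
`J(f) ≤ 1/(2β) + α²/(2γ)`; moreover `J(0) = 0`, so
`0 ≤ sup_f J(f) ≤ 1/(2β) + α²/(2γ)`. -/
theorem rpc_boundedness {X : Type*} [MeasurableSpace X] (P Q : Measure X)
    [IsProbabilityMeasure P] [IsProbabilityMeasure Q]
    (α β γ : ℝ) (hα : 0 < α) (hβ : 0 < β) (hγ : 0 < γ) :
    (∀ f : X → ℝ, Measurable f → MemLp f 2 P → MemLp f 2 Q →
      rpcJ P Q α β γ f ≤ 1 / (2 * β) + α ^ 2 / (2 * γ)) ∧
    rpcJ P Q α β γ (fun _ => 0) = 0 ∧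
    0 ≤ sSup {z : ℝ | ∃ f : X → ℝ, Measurable f ∧ MemLp f 2 P ∧ MemLp f 2 Q ∧
        z = rpcJ P Q α β γ f} ∧
    sSup {z : ℝ | ∃ f : X → ℝ, Measurable f ∧ MemLp f 2 P ∧ MemLp f 2 Q ∧
        z = rpcJ P Q α β γ f} ≤ 1 / (2 * β) + α ^ 2 / (2 * γ) := by

  set B := 1 / (2 * β) + α ^ 2 / (2 * γ) with hB
  have key : ∀ f : X → ℝ, Measurable f → MemLp f 2 P → MemLp f 2 Q →
      rpcJ P Q α β γ f ≤ B := by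
    intro f hm hP hQ
    have hfP : Integrable f P := hP.integrable one_le_two
    have hfQ : Integrable f Q := hQ.integrable one_le_two
    have hf2P : Integrable (fun x => f x ^ 2) P := hP.integrable_sq
    have hf2Q : Integrable (fun x => f x ^ 2) Q := hQ.integrable_sq
    have h1 : ∫ x, (f x - β / 2 * f x ^ 2) ∂P ≤ ∫ _x, (1 / (2 * β)) ∂P := by
      apply integral_mono (hfP.sub (hf2P.const_mul _)) (integrable_const _)
      intro x
      simp only [Pi.sub_apply]
      have h := sq_nonneg (β * f x - 1)
      have hb : (2 * β) * (1 / (2 * β)) = 1 := by field_simp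
      nlinarith
    have h2 : ∫ x, (-(α * f x) - γ / 2 * f x ^ 2) ∂Q ≤ ∫ _x, (α ^ 2 / (2 * γ)) ∂Q := by
      apply integral_mono ((hfQ.const_mul α).neg.sub (hf2Q.const_mul _)) (integrable_const _)
      intro x
      simp only [Pi.sub_apply, Pi.neg_apply]
      have h := sq_nonneg (γ * f x + α)
      have hb : (2 * γ) * (α ^ 2 / (2 * γ)) = α ^ 2 := by field_simp
      nlinarith
    have e1 : ∫ x, (f x - β / 2 * f x ^ 2) ∂P
        = (∫ x, f x ∂P) - β / 2 * ∫ x, f x ^ 2 ∂P := by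
      rw [integral_sub hfP (hf2P.const_mul _), integral_const_mul]
    have e2 : ∫ x, (-(α * f x) - γ / 2 * f x ^ 2) ∂Q
        = -(α * ∫ x, f x ∂Q) - γ / 2 * ∫ x, f x ^ 2 ∂Q := by
      have hn : Integrable (fun x => -(α * f x)) Q := (hfQ.const_mul α).neg
      rw [integral_sub hn (hf2Q.const_mul _), integral_neg, integral_const_mul,
        integral_const_mul]
    simp only [integral_const, measure_univ, probReal_univ, ENNReal.toReal_one, one_smul, smul_eq_mul] at h1 h2
    rw [e1] at h1
    rw [e2] at h2
    simp only [rpcJ, hB]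
    linarith
  have hzero : rpcJ P Q α β γ (fun _ => 0) = 0 := by
    simp [rpcJ]
  refine ⟨key, hzero, ?_, ?_⟩
  · exact le_csSup ⟨B, fun z ⟨f, hm, hP, hQ, hz⟩ => hz ▸ key f hm hP hQ⟩
      ⟨fun _ => 0, measurable_const, memLp_const 0, memLp_const 0, hzero.symm⟩
  · exact csSup_le ⟨0, fun _ => 0, measurable_const, memLp_const 0, memLp_const 0, hzero.symm⟩
      (fun z ⟨f, hm, hP, hQ, hz⟩ => hz ▸ key f hm hP hQ)
end

section
/- Let P and Q be probability measures on a measurable space 𝒳 with P absolutely continuous with respect to Q, let r = dP/dQ, fix α, β, γ > 0, and set f*(x) = (r(x) − α)/(β r(x) + γ). Then J(f*) = (β/2) E_P[(f*)²] + (γ/2) E_Q[(f*)²] = ((β + γ)/2) E_{P'}[(f*)²], where J(g) = E_P[g] − α E_Q[g] − (β/2) E_P[g²] − (γ/2) E_Q[g²] and P' = (β/(β+γ)) P + (γ/(β+γ)) Q is the mixture distribution of P and Q. -/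
open MeasureTheory

/-- The identity relating J_RPC to a generalized Chi-square divergence: with
`P' = (β/(β+γ)) P + (γ/(β+γ)) Q` the mixture of `P` and `Q`, and
`f* = (dP/dQ - α)/(β dP/dQ + γ)`, one has
`J(f*) = (β/2) E_P[(f*)²] + (γ/2) E_Q[(f*)²] = ((β+γ)/2) E_{P'}[(f*)²]`. -/
theorem rpc_chi_square_identity {X : Type*} [MeasurableSpace X] (P Q : Measure X)
    [IsProbabilityMeasure P] [IsProbabilityMeasure Q] (hPQ : P ≪ Q)
    (α β γ : ℝ) (hα : 0 < α) (hβ : 0 < β) (hγ : 0 < γ) :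
    rpcJ P Q α β γ (relRatio P Q α β γ)
        = β / 2 * (∫ x, (relRatio P Q α β γ x) ^ 2 ∂P)
          + γ / 2 * (∫ x, (relRatio P Q α β γ x) ^ 2 ∂Q) ∧
    rpcJ P Q α β γ (relRatio P Q α β γ)
        = (β + γ) / 2 *
          (∫ x, (relRatio P Q α β γ x) ^ 2
            ∂(ENNReal.ofReal (β / (β + γ)) • P + ENNReal.ofReal (γ / (β + γ)) • Q)) := by
  set r : X → ℝ := fun x => (P.rnDeriv Q x).toReal with hr_def
  set f : X → ℝ := fun x => relRatio P Q α β γ x with hf_def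
  have hr_meas : Measurable r := (Measure.measurable_rnDeriv P Q).ennreal_toReal
  have hf_meas : Measurable f :=
    (hr_meas.sub measurable_const).div ((measurable_const.mul hr_meas).add measurable_const)
  have hr_nonneg : ∀ x, 0 ≤ r x := fun x => ENNReal.toReal_nonneg
  have hd_pos : ∀ x, 0 < β * r x + γ := fun x => by nlinarith [hr_nonneg x]
  set C : ℝ := 1 / β + α / γ with hC_def
  have hf_bdd : ∀ x, |f x| ≤ C := by
    intro x
    have ht := hr_nonneg x
    have hd := hd_pos x
    have h1 : |r x - α| ≤ r x + α := abs_le.mpr ⟨by linarith, by linarith⟩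
    have h2 : |f x| = |r x - α| / (β * r x + γ) := by
      rw [hf_def]; simp only [relRatio]; rw [abs_div, abs_of_pos hd]
    have h3 : |r x - α| / (β * r x + γ) ≤ (r x + α) / (β * r x + γ) :=
      div_le_div_of_nonneg_right h1 hd.le |>.trans_eq rfl
    have h4 : r x / (β * r x + γ) ≤ 1 / β := by
      rw [div_le_div_iff₀ hd hβ]; nlinarith
    have h5 : α / (β * r x + γ) ≤ α / γ := by
      rw [div_le_div_iff₀ hd hγ]; nlinarith [mul_nonneg (mul_nonneg hα.le hβ.le) ht]
    calc |f x| = |r x - α| / (β * r x + γ) := h2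
      _ ≤ (r x + α) / (β * r x + γ) := by
          exact div_le_div_of_nonneg_right h1 hd.le
      _ = r x / (β * r x + γ) + α / (β * r x + γ) := add_div _ _ _
      _ ≤ 1 / β + α / γ := add_le_add h4 h5
  have hf2_bdd : ∀ x, |f x ^ 2| ≤ C ^ 2 := by
    intro x
    rw [abs_pow]
    exact pow_le_pow_left₀ (abs_nonneg _) (hf_bdd x) 2
  -- integrability
  have hintf : ∀ (μ : Measure X) [IsFiniteMeasure μ], Integrable f μ := by
    intro μ _
    exact ⟨hf_meas.aestronglyMeasurable,
      HasFiniteIntegral.of_bounded (C := C) (Filter.Eventually.of_forall hf_bdd)⟩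
  have hintf2 : ∀ (μ : Measure X) [IsFiniteMeasure μ], Integrable (fun x => f x ^ 2) μ := by
    intro μ _
    exact ⟨(hf_meas.pow_const 2).aestronglyMeasurable,
      HasFiniteIntegral.of_bounded (C := C ^ 2) (Filter.Eventually.of_forall hf2_bdd)⟩
  have hfP := hintf P; have hfQ := hintf Q
  have hf2P := hintf2 P; have hf2Q := hintf2 Q
  -- change of measure
  have e1 : ∫ x, f x ∂P = ∫ x, r x * f x ∂Q := by
    rw [← integral_rnDeriv_smul hPQ]; simp [smul_eq_mul]; rfl
  have e2 : ∫ x, f x ^ 2 ∂P = ∫ x, r x * f x ^ 2 ∂Q := by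
    rw [← integral_rnDeriv_smul hPQ]; simp [smul_eq_mul]; rfl
  have hrfQ : Integrable (fun x => r x * f x) Q := by
    have := (integrable_rnDeriv_smul_iff hPQ).mpr hfP
    simpa [smul_eq_mul] using this
  have hrf2Q : Integrable (fun x => r x * f x ^ 2) Q := by
    have := (integrable_rnDeriv_smul_iff hPQ).mpr hf2P
    simpa [smul_eq_mul] using this
  -- pointwise identity
  have hpt : ∀ x, r x * f x - α * f x = β * (r x * f x ^ 2) + γ * f x ^ 2 := by
    intro x
    have hd := hd_pos x
    have hfx : f x = (r x - α) / (β * r x + γ) := rfl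
    rw [hfx]
    field_simp
  -- key identity
  have key : (∫ x, f x ∂P) - α * (∫ x, f x ∂Q)
      = β * (∫ x, f x ^ 2 ∂P) + γ * (∫ x, f x ^ 2 ∂Q) := by
    rw [e1, e2]
    rw [← integral_const_mul, ← integral_sub hrfQ (hfQ.const_mul α),
      ← integral_const_mul β, ← integral_const_mul γ,
      ← integral_add (hrf2Q.const_mul β) (hf2Q.const_mul γ)]
    exact integral_congr_ae (Filter.Eventually.of_forall hpt)
  refine ⟨?_, ?_⟩
  · show rpcJ P Q α β γ f = β / 2 * (∫ x, f x ^ 2 ∂P) + γ / 2 * (∫ x, f x ^ 2 ∂Q)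
    unfold rpcJ
    linarith [key]
  · show rpcJ P Q α β γ f = (β + γ) / 2 *
      (∫ x, f x ^ 2 ∂(ENNReal.ofReal (β / (β + γ)) • P + ENNReal.ofReal (γ / (β + γ)) • Q))
    have hbg : 0 < β + γ := by linarith
    have hb' : (0:ℝ) ≤ β / (β + γ) := by positivity
    have hg' : (0:ℝ) ≤ γ / (β + γ) := by positivity
    have hmix : (∫ x, f x ^ 2 ∂(ENNReal.ofReal (β / (β + γ)) • P
          + ENNReal.ofReal (γ / (β + γ)) • Q))
        = (β / (β + γ)) * (∫ x, f x ^ 2 ∂P) + (γ / (β + γ)) * (∫ x, f x ^ 2 ∂Q) := by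
      rw [integral_add_measure (hf2P.smul_measure ENNReal.ofReal_ne_top)
        (hf2Q.smul_measure ENNReal.ofReal_ne_top),
        integral_smul_measure, integral_smul_measure,
        ENNReal.toReal_ofReal hb', ENNReal.toReal_ofReal hg']
      simp [smul_eq_mul]
    rw [hmix]
    unfold rpcJ
    have hne : β + γ ≠ 0 := ne_of_gt hbg
    field_simp
    nlinarith [key]
end

section
/- Let P and Q be probability measures on a measurable space 𝒳 with P absolutely continuous with respect to Q and KL(P ‖ Q) < ∞. Then for every measurable f : 𝒳 → ℝ such that f is P-integrable and e^{f−1} is Q-integrable, E_P[f] − E_Q[e^{f−1}] ≤ KL(P ‖ Q), and the supremum of the left-hand side over all such f equals KL(P ‖ Q), attained at f = 1 + log(dP/dQ). -/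
open MeasureTheory

/-- The Kullback–Leibler divergence `KL(P‖Q) = ∫ log (dP/dQ) dP` (as a real
number, meaningful when `P ≪ Q` and the integral is finite). -/
noncomputable def klReal {X : Type*} [MeasurableSpace X] (P Q : Measure X) : ℝ :=
  ∫ x, Real.log ((P.rnDeriv Q x).toReal) ∂P

/-- Pointwise key inequality: for `a ≥ 0`, `t * a - exp (t - 1) ≤ a * log a`. -/
lemma nwj_pointwise (a t : ℝ) (ha : 0 ≤ a) :
    a * t - Real.exp (t - 1) ≤ a * Real.log a := by
  rcases ha.eq_or_lt with h | h
  · simp [← h]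
    positivity
  · have h1 : t - 1 - Real.log a + 1 ≤ Real.exp (t - 1 - Real.log a) :=
      Real.add_one_le_exp _
    have h2 : Real.exp (t - 1 - Real.log a) = Real.exp (t - 1) / a := by
      rw [Real.exp_sub, Real.exp_log h]
    rw [h2] at h1
    have h3 : a * (t - 1 - Real.log a + 1) ≤ Real.exp (t - 1) := by
      calc a * (t - 1 - Real.log a + 1) ≤ a * (Real.exp (t - 1) / a) := by
            exact mul_le_mul_of_nonneg_left h1 h.le
        _ = Real.exp (t - 1) := by field_simp
    nlinarith

/-- The Nguyen–Wainwright–Jordan representation of the KL divergence: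
for probability measures `P ≪ Q` with `KL(P‖Q) < ∞`, every measurable `f` with
`f ∈ L¹(P)` and `e^{f-1} ∈ L¹(Q)` satisfies `E_P[f] - E_Q[e^{f-1}] ≤ KL(P‖Q)`,
the supremum of the left-hand side over all such `f` equals `KL(P‖Q)`, and it is
attained at `f = 1 + log (dP/dQ)` (for which `e^{f-1} = dP/dQ`). -/
theorem nwj_representation {X : Type*} [MeasurableSpace X] (P Q : Measure X)
    [IsProbabilityMeasure P] [IsProbabilityMeasure Q] (hPQ : P ≪ Q)
    (hKL : Integrable (fun x => Real.log ((P.rnDeriv Q x).toReal)) P) :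
    (∀ f : X → ℝ, Measurable f → Integrable f P →
      Integrable (fun x => Real.exp (f x - 1)) Q →
      (∫ x, f x ∂P) - (∫ x, Real.exp (f x - 1) ∂Q) ≤ klReal P Q) ∧
    sSup {z : ℝ | ∃ f : X → ℝ, Measurable f ∧ Integrable f P ∧
        Integrable (fun x => Real.exp (f x - 1)) Q ∧
        z = (∫ x, f x ∂P) - (∫ x, Real.exp (f x - 1) ∂Q)}
      = klReal P Q ∧
    (∫ x, (1 + Real.log ((P.rnDeriv Q x).toReal)) ∂P)
        - (∫ x, (P.rnDeriv Q x).toReal ∂Q) = klReal P Q := by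
  set g : X → ℝ := fun x => (P.rnDeriv Q x).toReal with hg
  have hgmeas : Measurable g := (Measure.measurable_rnDeriv P Q).ennreal_toReal
  have hgnn : ∀ x, 0 ≤ g x := fun x => ENNReal.toReal_nonneg
  have hgint : Integrable g Q := Measure.integrable_toReal_rnDeriv
  have hgint1 : ∫ x, g x ∂Q = 1 := by
    rw [hg, Measure.integral_toReal_rnDeriv hPQ]; simp
  -- Part 1: the inequality
  have part1 : ∀ f : X → ℝ, Measurable f → Integrable f P →
      Integrable (fun x => Real.exp (f x - 1)) Q →
      (∫ x, f x ∂P) - (∫ x, Real.exp (f x - 1) ∂Q) ≤ klReal P Q := by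
    intro f hf hfP hef
    have hfQ : Integrable (fun x => g x * f x) Q := by
      simpa [smul_eq_mul] using (integrable_rnDeriv_smul_iff hPQ).mpr hfP
    have hlogQ : Integrable (fun x => g x * Real.log (g x)) Q := by
      simpa [smul_eq_mul] using (integrable_rnDeriv_smul_iff hPQ).mpr hKL
    have h1 : ∫ x, f x ∂P = ∫ x, g x * f x ∂Q := by
      simpa [smul_eq_mul] using (integral_rnDeriv_smul hPQ (f := f)).symm
    have h2 : klReal P Q = ∫ x, g x * Real.log (g x) ∂Q := by
      simpa [klReal, smul_eq_mul] using
        (integral_rnDeriv_smul hPQ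
          (f := fun x => Real.log ((P.rnDeriv Q x).toReal))).symm
    rw [h1, h2, ← integral_sub hfQ hef]
    refine integral_mono (hfQ.sub hef) hlogQ fun x => ?_
    exact nwj_pointwise (g x) (f x) (hgnn x)
  -- Part 3: attainment
  have hPpos : ∀ᵐ x ∂P, 0 < g x := by
    filter_upwards [Measure.rnDeriv_pos hPQ, hPQ.ae_le (Measure.rnDeriv_lt_top P Q)]
      with x h1 h2
    exact ENNReal.toReal_pos h1.ne' h2.ne
  have part3 : (∫ x, (1 + Real.log (g x)) ∂P) - (∫ x, g x ∂Q) = klReal P Q := by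
    rw [integral_add (integrable_const 1) hKL, hgint1]
    simp [klReal]
  refine ⟨part1, ?_, part3⟩
  -- Part 2: the supremum
  set S := {z : ℝ | ∃ f : X → ℝ, Measurable f ∧ Integrable f P ∧
      Integrable (fun x => Real.exp (f x - 1)) Q ∧
      z = (∫ x, f x ∂P) - (∫ x, Real.exp (f x - 1) ∂Q)} with hS
  have hbdd : ∀ z ∈ S, z ≤ klReal P Q := by
    rintro z ⟨f, hf, hfP, hef, rfl⟩
    exact part1 f hf hfP hef
  have hne : S.Nonempty := by
    refine ⟨0 - ∫ x, Real.exp ((0 : ℝ) - 1) ∂Q, fun _ => 0, measurable_const,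
      integrable_const 0, integrable_const _, by simp⟩
  refine le_antisymm (csSup_le hne hbdd) ?_
  -- show klReal P Q ≤ sSup S : for each δ > 0 exhibit an element ≥ klReal - δ
  refine le_of_forall_pos_le_add fun δ hδ => ?_
  set f : X → ℝ := fun x => 1 + Real.log (if g x = 0 then δ else g x) with hf
  have hfmeas : Measurable f := by
    apply measurable_const.add
    exact (Measurable.ite (hgmeas (measurableSet_singleton 0)) measurable_const hgmeas).log
  have hfae : f =ᵐ[P] fun x => 1 + Real.log (g x) := by
    filter_upwards [hPpos] with x hx
    simp [hf, hx.ne']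
  have hfP : Integrable f P :=
    ((integrable_const 1).add hKL).congr hfae.symm
  have hexp : ∀ x, Real.exp (f x - 1) = if g x = 0 then δ else g x := by
    intro x
    have : (0:ℝ) < if g x = 0 then δ else g x := by
      split_ifs with h
      · exact hδ
      · exact lt_of_le_of_ne (hgnn x) (Ne.symm h)
    simp [hf, Real.exp_log this]
  have hexp_le : ∀ x, Real.exp (f x - 1) ≤ g x + δ := by
    intro x
    rw [hexp x]
    split_ifs with h
    · simp [h]
    · linarith [hδ.le]
  have hef : Integrable (fun x => Real.exp (f x - 1)) Q := by
    refine Integrable.mono (hgint.add (integrable_const δ)) ?_ ?_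
    · exact ((hfmeas.sub measurable_const).exp).aestronglyMeasurable
    · refine Filter.Eventually.of_forall fun x => ?_
      simp only [Pi.add_apply]
      rw [Real.norm_eq_abs, Real.norm_eq_abs, abs_of_pos (Real.exp_pos _),
        abs_of_nonneg (by linarith [hgnn x, hδ.le] : (0:ℝ) ≤ g x + δ)]
      exact hexp_le x
  have hintf : ∫ x, f x ∂P = 1 + klReal P Q := by
    rw [integral_congr_ae hfae, integral_add (integrable_const 1) hKL]
    simp [klReal]
  have hintexp : ∫ x, Real.exp (f x - 1) ∂Q ≤ 1 + δ := by
    calc ∫ x, Real.exp (f x - 1) ∂Q ≤ ∫ x, (g x + δ) ∂Q :=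
          integral_mono hef (hgint.add (integrable_const δ)) hexp_le
      _ = 1 + δ := by rw [integral_add hgint (integrable_const δ), hgint1]; simp
  have hmem : (∫ x, f x ∂P) - (∫ x, Real.exp (f x - 1) ∂Q) ∈ S :=
    ⟨f, hfmeas, hfP, hef, rfl⟩
  have : klReal P Q - δ ≤ (∫ x, f x ∂P) - (∫ x, Real.exp (f x - 1) ∂Q) := by
    rw [hintf]; linarith
  have hle := le_csSup ⟨klReal P Q, hbdd⟩ hmem
  linarith
end

section
/- Let P and Q be probability measures on a measurable space 𝒳 with P absolutely continuous with respect to Q, let r = dP/dQ, fix α, β, γ > 0, and set f*(x) = (r(x) − α)/(β r(x) + γ). Then f* is bounded (−α/γ ≤ f* < 1/β everywhere on the set where r ≥ 0), f* ∈ L²(P) ∩ L²(Q), and the optimal value of the RPC functional satisfies 0 ≤ J(f*) ≤ 1/(2β) + α²/(2γ), where J(g) = E_P[g] − α E_Q[g] − (β/2) E_P[g²] − (γ/2) E_Q[g²]. -/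
open MeasureTheory

/-- Combination of Lemma 1 and Proposition 1: the optimal solution
`f* = (dP/dQ - α)/(β dP/dQ + γ)` of the RPC objective is bounded
(`-α/γ ≤ f* < 1/β` everywhere, since the density ratio is nonnegative), lies in
`L²(P) ∩ L²(Q)`, and the optimal value satisfies
`0 ≤ J(f*) ≤ 1/(2β) + α²/(2γ)`. -/
theorem rpc_optimal_value_bounds {X : Type*} [MeasurableSpace X] (P Q : Measure X)
    [IsProbabilityMeasure P] [IsProbabilityMeasure Q] (hPQ : P ≪ Q)
    (α β γ : ℝ) (hα : 0 < α) (hβ : 0 < β) (hγ : 0 < γ) :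
    (∀ x, -(α / γ) ≤ relRatio P Q α β γ x ∧ relRatio P Q α β γ x < 1 / β) ∧
    MemLp (relRatio P Q α β γ) 2 P ∧ MemLp (relRatio P Q α β γ) 2 Q ∧
    0 ≤ rpcJ P Q α β γ (relRatio P Q α β γ) ∧
    rpcJ P Q α β γ (relRatio P Q α β γ) ≤ 1 / (2 * β) + α ^ 2 / (2 * γ) := by
  set r : X → ℝ := fun x => (P.rnDeriv Q x).toReal with hrdef
  have hr0 : ∀ x, 0 ≤ r x := fun x => ENNReal.toReal_nonneg
  have hd : ∀ x, 0 < β * r x + γ := by intro x; have := hr0 x; nlinarith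
  have hrm : Measurable r := (Measure.measurable_rnDeriv P Q).ennreal_toReal
  set f : X → ℝ := relRatio P Q α β γ with hfdef
  have hfx : ∀ x, f x = (r x - α) / (β * r x + γ) := fun x => rfl
  -- pointwise bounds
  have hbound : ∀ x, -(α / γ) ≤ f x ∧ f x < 1 / β := by
    intro x
    have hdx := hd x; have hrx := hr0 x
    constructor
    · rw [hfx, show -(α / γ) = (-α) / γ by ring, div_le_div_iff₀ hγ hdx]
      nlinarith [mul_nonneg (mul_nonneg hα.le hβ.le) hrx]
    · rw [hfx, div_lt_div_iff₀ hdx hβ]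
      nlinarith [mul_nonneg hα.le hβ.le]
  -- uniform bound on |f|
  set C : ℝ := max (α / γ) (1 / β) with hC
  have habs : ∀ x, |f x| ≤ C := by
    intro x
    rcases hbound x with ⟨h1, h2⟩
    rw [abs_le]
    refine ⟨le_trans ?_ h1, h2.le.trans (le_max_right _ _)⟩
    simp only [hC, neg_le_neg_iff]
    exact (le_max_left _ _).trans (le_abs_self _) |>.trans (abs_of_nonneg (le_max_of_le_left (by positivity))).le
  have hfm : Measurable f := by
    apply Measurable.div ((hrm.sub measurable_const))
    exact (hrm.const_mul β).add_const γ
  have hmem : ∀ (μ : Measure X), IsProbabilityMeasure μ → MemLp f 2 μ := by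
    intro μ _
    exact MemLp.of_bound hfm.aestronglyMeasurable C (Filter.Eventually.of_forall habs)
  -- integrability facts over Q
  have hfi : Integrable f Q :=
    ((hmem Q inferInstance).integrable (by norm_num))
  have hf2i : Integrable (fun x => f x ^ 2) Q := by
    have := (hmem Q inferInstance)
    simpa using this.integrable_sq
  have hri : Integrable r Q := Measure.integrable_toReal_rnDeriv
  have hrfi : Integrable (fun x => r x * f x) Q := by
    apply Integrable.mono (hri.const_mul C) (hrm.mul hfm).aestronglyMeasurable
    apply Filter.Eventually.of_forall
    intro x
    rw [Real.norm_eq_abs, Real.norm_eq_abs, Pi.mul_apply, abs_mul (r x), abs_of_nonneg (hr0 x)]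
    calc r x * |f x| ≤ r x * C := mul_le_mul_of_nonneg_left (habs x) (hr0 x)
      _ ≤ |C * r x| := by rw [mul_comm]; exact le_abs_self _
  have hrf2i : Integrable (fun x => r x * f x ^ 2) Q := by
    apply Integrable.mono (hri.const_mul (C ^ 2)) (hrm.mul (hfm.pow_const 2)).aestronglyMeasurable
    apply Filter.Eventually.of_forall
    intro x
    rw [Real.norm_eq_abs, Real.norm_eq_abs, Pi.mul_apply, abs_mul (r x), abs_of_nonneg (hr0 x)]
    have h1 : |f x ^ 2| ≤ C ^ 2 := by
      rw [abs_pow]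
      exact pow_le_pow_left₀ (abs_nonneg _) (habs x) 2
    calc r x * |f x ^ 2| ≤ r x * C ^ 2 := mul_le_mul_of_nonneg_left h1 (hr0 x)
      _ ≤ |C ^ 2 * r x| := by rw [mul_comm]; exact le_abs_self _
  -- transfer P-integrals to Q-integrals
  have hPf : ∫ x, f x ∂P = ∫ x, r x * f x ∂Q := by
    rw [← integral_rnDeriv_smul hPQ]
    simp [smul_eq_mul]
    rfl
  have hPf2 : ∫ x, f x ^ 2 ∂P = ∫ x, r x * f x ^ 2 ∂Q := by
    rw [← integral_rnDeriv_smul hPQ]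
    simp [smul_eq_mul]
    rfl
  -- J as a single integral over Q
  set g : X → ℝ := fun x => (r x - α) ^ 2 / (2 * (β * r x + γ)) with hg
  have hsplit : ∫ x, (r x * f x - α * f x - β / 2 * (r x * f x ^ 2) - γ / 2 * f x ^ 2) ∂Q
      = (∫ x, r x * f x ∂Q) - α * (∫ x, f x ∂Q) - β / 2 * (∫ x, r x * f x ^ 2 ∂Q)
        - γ / 2 * (∫ x, f x ^ 2 ∂Q) := by
    have iA : Integrable (fun x => r x * f x - α * f x) Q := hrfi.sub (hfi.const_mul α)
    have iB : Integrable (fun x => r x * f x - α * f x - β / 2 * (r x * f x ^ 2)) Q :=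
      iA.sub (hrf2i.const_mul (β / 2))
    rw [integral_sub iB (hf2i.const_mul (γ / 2)),
      integral_sub iA (hrf2i.const_mul (β / 2)),
      integral_sub hrfi (hfi.const_mul α),
      integral_const_mul, integral_const_mul, integral_const_mul]
  have hgeq : ∀ x, r x * f x - α * f x - β / 2 * (r x * f x ^ 2) - γ / 2 * f x ^ 2 = g x := by
    intro x
    have hdx := (hd x).ne'
    rw [hfx, hg]
    rw [eq_div_iff (by positivity)]
    have hdx2 : r x * β + γ ≠ 0 := by rw [mul_comm]; exact hdx
    field_simp
    ring
  have hJ : rpcJ P Q α β γ f = ∫ x, g x ∂Q := by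
    rw [rpcJ, hPf, hPf2, ← hsplit]
    exact integral_congr_ae (Filter.Eventually.of_forall hgeq)
  have hg0 : ∀ x, 0 ≤ g x := by
    intro x
    exact div_nonneg (sq_nonneg _) (by nlinarith [hd x])
  have hgle : ∀ x, g x ≤ r x / (2 * β) + α ^ 2 / (2 * γ) := by
    intro x
    have hdx := hd x; have hrx := hr0 x
    rw [hg, div_add_div _ _ (by positivity : (2 * β : ℝ) ≠ 0) (by positivity : (2 * γ : ℝ) ≠ 0),
      div_le_div_iff₀ (by nlinarith) (by positivity)]
    nlinarith [mul_nonneg hrx (sq_nonneg (β * α + γ)), sq_nonneg (r x - α)]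
  have hmaj : Integrable (fun x => r x / (2 * β) + α ^ 2 / (2 * γ)) Q :=
    (hri.div_const _).add (integrable_const _)
  have hgi : Integrable g Q := by
    have hgm : Measurable g := by
      apply Measurable.div ((hrm.sub measurable_const).pow_const 2)
      exact ((hrm.const_mul β).add_const γ).const_mul 2
    apply Integrable.mono hmaj hgm.aestronglyMeasurable
    apply Filter.Eventually.of_forall
    intro x
    have hnn : 0 ≤ r x / (2 * β) + α ^ 2 / (2 * γ) := by
      have := hr0 x; positivity
    rw [Real.norm_eq_abs, Real.norm_eq_abs, abs_of_nonneg (hg0 x), abs_of_nonneg hnn]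
    exact hgle x
  refine ⟨hbound, hmem P inferInstance, hmem Q inferInstance, ?_, ?_⟩
  · rw [hJ]
    exact integral_nonneg hg0
  · rw [hJ]
    have h1 : ∫ x, g x ∂Q ≤ ∫ x, (r x / (2 * β) + α ^ 2 / (2 * γ)) ∂Q :=
      integral_mono hgi hmaj hgle
    have h2 : ∫ x, (r x / (2 * β) + α ^ 2 / (2 * γ)) ∂Q
        = 1 / (2 * β) + α ^ 2 / (2 * γ) := by
      rw [integral_add (hri.div_const _) (integrable_const _), integral_div,
        Measure.integral_toReal_rnDeriv hPQ, integral_const]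
      simp
    linarith
end
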